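/- arXiv:2101.09674 — 6 statements merged into one kernel-verified Lean document; each statement's English description precedes it below -/
import Mathlib

section
/- For every square complex matrix A and every natural number s, φ(A) = 2^{-s} · φ(X) · (e^X + I)(e^{2X} + I)···(e^{2^{s-1}X} + I), where X = 2^{-s} A. -/
open NormedSpace

section Aux

variable {𝔸 : Type*} [NormedRing 𝔸] [NormedAlgebra ℂ 𝔸] [CompleteSpace 𝔸]

theorem phi_norm_summable (M : 𝔸) :
    Summable fun k : ℕ => ‖((Nat.factorial (k + 1) : ℂ))⁻¹ • M ^ k‖ := by
  apply Summable.of_nonneg_of_le (fun k => norm_nonneg _)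
    (fun k => ?_) (norm_expSeries_summable' (𝕂 := ℂ) M)
  rw [norm_smul, norm_smul, norm_inv, norm_inv, Complex.norm_natCast, Complex.norm_natCast]
  have h1 : (0:ℝ) < (Nat.factorial k : ℝ) := by
    exact_mod_cast Nat.cast_pos.mpr k.factorial_pos
  have h2 : ((Nat.factorial (k+1) : ℝ))⁻¹ ≤ ((Nat.factorial k : ℝ))⁻¹ := by
    apply inv_anti₀ h1
    exact_mod_cast Nat.factorial_le (Nat.le_succ k)
  exact mul_le_mul_of_nonneg_right h2 (norm_nonneg _)

theorem phi_summable (M : 𝔸) :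
    Summable fun k : ℕ => ((Nat.factorial (k + 1) : ℂ))⁻¹ • M ^ k :=
  (phi_norm_summable M).of_norm

theorem coeff_sum (n : ℕ) :
    (∑ kl ∈ Finset.HasAntidiagonal.antidiagonal n,
      (((Nat.factorial (kl.1 + 1) : ℂ)) * (Nat.factorial kl.2 : ℂ))⁻¹) =
      ((2 : ℂ) ^ (n + 1) - 1) / (Nat.factorial (n + 1) : ℂ) := by
  rw [Finset.Nat.sum_antidiagonal_eq_sum_range_succ_mk]
  have h : ∀ k ∈ Finset.range (n + 1),
      ((Nat.factorial (k + 1) : ℂ) * (Nat.factorial (n - k) : ℂ))⁻¹ =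
      ((n + 1).choose (k + 1) : ℂ) / (Nat.factorial (n + 1) : ℂ) := by
    intro k hk
    rw [Finset.mem_range] at hk
    have hkn : k + 1 ≤ n + 1 := by omega
    have key := Nat.choose_mul_factorial_mul_factorial hkn
    have h2 : n + 1 - (k + 1) = n - k := by omega
    rw [h2] at key
    have hc : ((n+1).choose (k+1) : ℂ) * (Nat.factorial (k+1) : ℂ) * (Nat.factorial (n-k) : ℂ)
        = (Nat.factorial (n+1) : ℂ) := by exact_mod_cast congrArg Nat.cast key
    have ha : (Nat.factorial (k+1) : ℂ) ≠ 0 := Nat.cast_ne_zero.mpr (Nat.factorial_ne_zero _)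
    have hb : (Nat.factorial (n-k) : ℂ) ≠ 0 := Nat.cast_ne_zero.mpr (Nat.factorial_ne_zero _)
    have hf : (Nat.factorial (n+1) : ℂ) ≠ 0 := Nat.cast_ne_zero.mpr (Nat.factorial_ne_zero _)
    field_simp
    linear_combination -hc
  rw [Finset.sum_congr rfl h, ← Finset.sum_div]
  congr 1
  have hs : ∑ k ∈ Finset.range (n + 1), ((n + 1).choose (k + 1) : ℂ)
      = (∑ i ∈ Finset.range (n + 2), ((n + 1).choose i : ℂ)) - 1 := by
    rw [Finset.sum_range_succ' (fun i => ((n + 1).choose i : ℂ)) (n + 1)]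
    simp
  rw [hs, ← Nat.cast_sum, Nat.sum_range_choose]
  push_cast
  ring

end Aux

section Key

variable {𝔸 : Type*} [NormedRing 𝔸] [NormedAlgebra ℂ 𝔸] [CompleteSpace 𝔸]

theorem phi_two_smul (M : 𝔸) :
    (∑' k : ℕ, ((Nat.factorial (k + 1) : ℂ))⁻¹ • ((2 : ℂ) • M) ^ k) =
      (2 : ℂ)⁻¹ •
        ((∑' k : ℕ, ((Nat.factorial (k + 1) : ℂ))⁻¹ • M ^ k) * (exp M + 1)) := by
  have hφn := phi_norm_summable M
  have hφ := phi_summable M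
  have hen : Summable fun n : ℕ => ‖((Nat.factorial n : ℂ))⁻¹ • M ^ n‖ :=
    norm_expSeries_summable' (𝕂 := ℂ) M
  have hcauchy : Summable fun n : ℕ =>
      ∑ kl ∈ Finset.HasAntidiagonal.antidiagonal n,
        (((Nat.factorial (kl.1 + 1) : ℂ))⁻¹ • M ^ kl.1) *
          (((Nat.factorial kl.2 : ℂ))⁻¹ • M ^ kl.2) :=
    (summable_norm_sum_mul_antidiagonal_of_summable_norm hφn hen).of_norm
  have hinner : ∀ n : ℕ,
      (∑ kl ∈ Finset.HasAntidiagonal.antidiagonal n,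
        (((Nat.factorial (kl.1 + 1) : ℂ))⁻¹ • M ^ kl.1) *
          (((Nat.factorial kl.2 : ℂ))⁻¹ • M ^ kl.2)) =
      (((2 : ℂ) ^ (n + 1) - 1) / (Nat.factorial (n + 1) : ℂ)) • M ^ n := by
    intro n
    rw [← coeff_sum n, Finset.sum_smul]
    apply Finset.sum_congr rfl
    intro kl hkl
    rw [Finset.HasAntidiagonal.mem_antidiagonal] at hkl
    rw [smul_mul_smul_comm, ← pow_add, hkl, mul_inv]
  rw [mul_add, mul_one, exp_eq_tsum (𝕂 := ℂ),
    tsum_mul_tsum_eq_tsum_sum_antidiagonal_of_summable_norm hφn hen,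
    ← Summable.tsum_add hcauchy hφ, ← Summable.tsum_const_smul ((2:ℂ)⁻¹)
      (by exact (hcauchy.add hφ))]
  apply tsum_congr
  intro k
  rw [hinner k, smul_pow, smul_smul, ← add_smul, smul_smul]
  congr 1
  have hf : (Nat.factorial (k+1) : ℂ) ≠ 0 := Nat.cast_ne_zero.mpr (Nat.factorial_ne_zero _)
  field_simp
  ring

end Key

section Main

variable {𝔸 : Type*} [NormedRing 𝔸] [NormedAlgebra ℂ 𝔸] [CompleteSpace 𝔸]

theorem phi_scaling (A : 𝔸) (s : ℕ) :
    (∑' k : ℕ, ((Nat.factorial (k + 1) : ℂ))⁻¹ • A ^ k) =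
      ((2 : ℂ) ^ s)⁻¹ •
        ((∑' k : ℕ, ((Nat.factorial (k + 1) : ℂ))⁻¹ • (((2 : ℂ) ^ s)⁻¹ • A) ^ k) *
          ((List.range s).map
            (fun i => exp (((2 : ℂ) ^ i) • (((2 : ℂ) ^ s)⁻¹ • A)) + 1)).prod) := by
  induction s with
  | zero => simp
  | succ s ih =>
    have hXY : ((2 : ℂ) ^ s)⁻¹ • A = (2 : ℂ) • (((2 : ℂ) ^ (s + 1))⁻¹ • A) := by
      rw [smul_smul]
      congr 1
      rw [pow_succ]
      field_simp
    rw [ih, hXY, phi_two_smul]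
    rw [List.range_succ_eq_map, List.map_cons, List.map_map, List.prod_cons]
    simp only [Function.comp_def, pow_succ, pow_zero, one_smul, mul_smul]
    rw [smul_mul_assoc, smul_smul, mul_assoc]
    congr 1
    rw [mul_inv]

end Main



/-- For every square complex matrix `A` and every `s : ℕ`,
`φ(A) = 2^{-s}·φ(X)·∏_{i=0}^{s-1}(e^{2^i X} + I)` where `X = 2^{-s} A`. -/
theorem matrix_phi_scaling_squaring (N : ℕ) (A : Matrix (Fin N) (Fin N) ℂ) (s : ℕ)
    (X : Matrix (Fin N) (Fin N) ℂ) (hX : X = ((2 : ℂ) ^ s)⁻¹ • A) :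
    (∑' k : ℕ, ((Nat.factorial (k + 1) : ℂ))⁻¹ • A ^ k) =
      ((2 : ℂ) ^ s)⁻¹ •
        ((∑' k : ℕ, ((Nat.factorial (k + 1) : ℂ))⁻¹ • X ^ k) *
          ((List.range s).map (fun i => NormedSpace.exp (((2 : ℂ) ^ i) • X) + 1)).prod) := by
  letI : SeminormedRing (Matrix (Fin N) (Fin N) ℂ) := Matrix.linftyOpSemiNormedRing
  letI : NormedRing (Matrix (Fin N) (Fin N) ℂ) := Matrix.linftyOpNormedRing
  letI : NormedAlgebra ℂ (Matrix (Fin N) (Fin N) ℂ) := Matrix.linftyOpNormedAlgebra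
  subst hX
  exact phi_scaling A s
end

section
/- For all real numbers α, β with α + β ≠ 0 and every complex number z, φ((α+β)z) = (1/(α+β)) · [β · e^{αz} · φ(βz) + α · φ(αz)], where φ(w) = Σ_{k=0}^∞ w^k/(k+1)!. -/
lemma exp_tsum' (w : ℂ) : Complex.exp w = ∑' n : ℕ, w ^ n / (Nat.factorial n : ℂ) := by
  rw [Complex.exp_eq_exp_ℂ, NormedSpace.exp_eq_tsum_div]

lemma summable_exp' (w : ℂ) : Summable (fun n : ℕ => w ^ n / (Nat.factorial n : ℂ)) :=
  NormedSpace.expSeries_div_summable w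

lemma phi_mul (w : ℂ) :
    w * (∑' k : ℕ, w ^ k / (Nat.factorial (k + 1) : ℂ)) = Complex.exp w - 1 := by
  have h := Summable.tsum_eq_zero_add (summable_exp' w)
  rw [← tsum_mul_left]
  have : (fun k : ℕ => w * (w ^ k / (Nat.factorial (k + 1) : ℂ)))
      = fun k : ℕ => w ^ (k + 1) / (Nat.factorial (k + 1) : ℂ) := by
    funext k; rw [pow_succ]; ring
  rw [this]
  rw [exp_tsum', h]
  simp

lemma phi_zero : (∑' k : ℕ, (0 : ℂ) ^ k / (Nat.factorial (k + 1) : ℂ)) = 1 := by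
  rw [tsum_eq_single 0]
  · simp
  · intro n hn; simp [zero_pow hn]

lemma phi_ne (w : ℂ) (hw : w ≠ 0) :
    (∑' k : ℕ, w ^ k / (Nat.factorial (k + 1) : ℂ)) = (Complex.exp w - 1) / w := by
  field_simp
  rw [mul_comm, phi_mul]

/-- For real `α β` with `α+β ≠ 0` and every complex `z`,
`φ((α+β)z) = (1/(α+β))·[β·e^{αz}·φ(βz) + α·φ(αz)]`. -/
theorem phi_general_recurrence (α β : ℝ) (hαβ : α + β ≠ 0) (z : ℂ) :
    (∑' k : ℕ, (((α : ℂ) + β) * z) ^ k / (Nat.factorial (k + 1) : ℂ)) =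
      (1 / ((α : ℂ) + β)) *
        ((β : ℂ) * Complex.exp ((α : ℂ) * z) *
            (∑' k : ℕ, ((β : ℂ) * z) ^ k / (Nat.factorial (k + 1) : ℂ)) +
          (α : ℂ) * (∑' k : ℕ, ((α : ℂ) * z) ^ k / (Nat.factorial (k + 1) : ℂ))) := by
  have hs : (α : ℂ) + β ≠ 0 := by
    rw [← Complex.ofReal_add]
    exact_mod_cast Complex.ofReal_ne_zero.mpr hαβ
  by_cases hz : z = 0
  · simp [hz, phi_zero, Complex.exp_zero]
    field_simp
    ring
  · by_cases ha : (α : ℂ) = 0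
    · have hb : (β : ℂ) ≠ 0 := by rwa [ha, zero_add] at hs
      rw [ha] at *
      rw [zero_add] at *
      simp only [Complex.exp_zero, zero_mul, tsum_zero]
      field_simp
      ring
    · by_cases hb : (β : ℂ) = 0
      · rw [hb] at *
        rw [add_zero] at *
        simp only [zero_mul, add_zero]
        field_simp
        ring
      · have haz : (α : ℂ) * z ≠ 0 := mul_ne_zero ha hz
        have hbz : (β : ℂ) * z ≠ 0 := mul_ne_zero hb hz
        have hsz : ((α : ℂ) + β) * z ≠ 0 := mul_ne_zero hs hz
        rw [phi_ne _ haz, phi_ne _ hbz, phi_ne _ hsz]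
        have hexp : Complex.exp (((α : ℂ) + β) * z)
            = Complex.exp ((α : ℂ) * z) * Complex.exp ((β : ℂ) * z) := by
          rw [← Complex.exp_add]; ring_nf
        rw [hexp]
        field_simp
        ring
end

section
/- For every square complex matrix A and every positive integer s, with Y = (1/s)A, one has φ(A) = (1/s) · φ(Y) · (e^{(s-1)Y} + e^{(s-2)Y} + ··· + e^{Y} + I), i.e., φ(A) = (1/s) · φ(Y) · Σ_{i=0}^{s-1} e^{iY}. -/
open NormedSpace Finset

private lemma phi_binom_sum_eq (n : ℕ) (x : ℂ) :
    ∑ j ∈ Finset.range (n + 1), x ^ j * ((n + 1).choose j : ℂ)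
      = (x + 1) ^ (n + 1) - x ^ (n + 1) := by
  have h := add_pow x 1 (n + 1)
  rw [Finset.sum_range_succ] at h
  simp only [one_pow, mul_one, Nat.choose_self, Nat.cast_one] at h
  linear_combination -h

private lemma phi_inner_sum (n : ℕ) (x : ℂ) :
    ∑ kj ∈ Finset.HasAntidiagonal.antidiagonal n, (((kj.1 + 1).factorial : ℂ))⁻¹ *
        ((((kj.2).factorial : ℂ))⁻¹ * x ^ kj.2) =
      ((x + 1) ^ (n + 1) - x ^ (n + 1)) * (((n + 1).factorial : ℂ))⁻¹ := by
  rw [Finset.Nat.sum_antidiagonal_eq_sum_range_succ_mk]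
  have hterm : ∀ k ∈ Finset.range (n + 1),
      (((k + 1).factorial : ℂ))⁻¹ * ((((n - k).factorial : ℂ))⁻¹ * x ^ (n - k))
        = (x ^ (n - k) * ((n + 1).choose (n - k) : ℂ)) * (((n + 1).factorial : ℂ))⁻¹ := by
    intro k hk
    rw [Finset.mem_range] at hk
    have hle : n - k ≤ n + 1 := by omega
    have hch : ((n + 1).choose (n - k)) * (n - k).factorial * (n + 1 - (n - k)).factorial
        = (n + 1).factorial := Nat.choose_mul_factorial_mul_factorial hle
    have h2 : n + 1 - (n - k) = k + 1 := by omega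
    rw [h2] at hch
    have hchC : (((n + 1).choose (n - k) : ℂ)) * ((n - k).factorial : ℂ)
        * ((k + 1).factorial : ℂ) = ((n + 1).factorial : ℂ) := by
      exact_mod_cast congrArg (Nat.cast (R := ℂ)) hch
    have h3 : (((n - k).factorial : ℂ)) ≠ 0 := Nat.cast_ne_zero.mpr (Nat.factorial_ne_zero _)
    have h4 : (((k + 1).factorial : ℂ)) ≠ 0 := Nat.cast_ne_zero.mpr (Nat.factorial_ne_zero _)
    have h5 : (((n + 1).factorial : ℂ)) ≠ 0 := Nat.cast_ne_zero.mpr (Nat.factorial_ne_zero _)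
    have hC : ((n + 1).choose (n - k) : ℂ)
        = ((n + 1).factorial : ℂ) * (((n - k).factorial : ℂ))⁻¹
            * (((k + 1).factorial : ℂ))⁻¹ := by
      field_simp
      linear_combination hchC
    rw [hC]
    field_simp
  rw [Finset.sum_congr rfl hterm, ← Finset.sum_mul]
  congr 1
  rw [← phi_binom_sum_eq n x]
  have := Finset.sum_range_reflect (fun j => x ^ j * ((n + 1).choose j : ℂ)) (n + 1)
  simpa using this

private lemma phi_key (s n : ℕ) :
    ∑ i ∈ Finset.range s, ∑ kj ∈ Finset.HasAntidiagonal.antidiagonal n, (((kj.1 + 1).factorial : ℂ))⁻¹ *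
        ((((kj.2).factorial : ℂ))⁻¹ * (i : ℂ) ^ kj.2)
      = (s : ℂ) ^ (n + 1) * (((n + 1).factorial : ℂ))⁻¹ := by
  have h1 : ∀ i ∈ Finset.range s,
      ∑ kj ∈ Finset.HasAntidiagonal.antidiagonal n, (((kj.1 + 1).factorial : ℂ))⁻¹ *
          ((((kj.2).factorial : ℂ))⁻¹ * (i : ℂ) ^ kj.2)
        = ((((i + 1 : ℕ) : ℂ)) ^ (n + 1) - ((i : ℕ) : ℂ) ^ (n + 1))
            * (((n + 1).factorial : ℂ))⁻¹ := by
    intro i _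
    rw [phi_inner_sum n (i : ℂ)]
    norm_num
  rw [Finset.sum_congr rfl h1, ← Finset.sum_mul]
  congr 1
  rw [Finset.sum_range_sub (fun i => ((i : ℕ) : ℂ) ^ (n + 1))]
  simp

private lemma phi_summable_norm {𝔸 : Type*} [NormedRing 𝔸] [NormedAlgebra ℂ 𝔸]
    (B : 𝔸) : Summable fun k => ‖(((k + 1).factorial : ℂ))⁻¹ • B ^ k‖ := by
  refine (NormedSpace.norm_expSeries_summable' (𝕂 := ℂ) B).of_nonneg_of_le
    (fun k => norm_nonneg _) fun k => ?_
  rw [norm_smul, norm_smul, norm_inv, norm_inv, Complex.norm_natCast, Complex.norm_natCast]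
  have h1 : (0 : ℝ) < (k.factorial : ℝ) := by exact_mod_cast k.factorial_pos
  have h2 : (k.factorial : ℝ) ≤ ((k + 1).factorial : ℝ) := by
    exact_mod_cast Nat.factorial_le (Nat.le_succ k)
  gcongr

private lemma phi_recurrence_aux {𝔸 : Type*} [NormedRing 𝔸] [NormedAlgebra ℂ 𝔸]
    [CompleteSpace 𝔸] (B : 𝔸) (s : ℕ) (hs : 1 ≤ s) :
    (∑' k : ℕ, ((Nat.factorial (k + 1) : ℂ))⁻¹ • ((s : ℂ) • B) ^ k) =
      ((s : ℂ))⁻¹ •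
        ((∑' k : ℕ, ((Nat.factorial (k + 1) : ℂ))⁻¹ • B ^ k) *
          ∑ i ∈ Finset.range s, NormedSpace.exp ((i : ℂ) • B)) := by
  have hsne : (s : ℂ) ≠ 0 := Nat.cast_ne_zero.mpr (by omega)
  have hφ := phi_summable_norm B
  have hexp : ∀ i : ℕ, Summable fun j => ‖((j.factorial : ℂ))⁻¹ • ((i : ℂ) • B) ^ j‖ :=
    fun i => NormedSpace.norm_expSeries_summable' (𝕂 := ℂ) _
  -- rewrite the product with each exponential as a Cauchy product
  have hcauchy : ∀ i : ℕ,
      (∑' k : ℕ, ((Nat.factorial (k + 1) : ℂ))⁻¹ • B ^ k) * NormedSpace.exp ((i : ℂ) • B)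
        = ∑' n : ℕ, ∑ kj ∈ Finset.HasAntidiagonal.antidiagonal n,
            (((kj.1 + 1).factorial : ℂ))⁻¹ • B ^ kj.1 *
              (((kj.2.factorial : ℂ))⁻¹ • ((i : ℂ) • B) ^ kj.2) := by
    intro i
    rw [NormedSpace.exp_eq_tsum (𝕂 := ℂ)]
    exact tsum_mul_tsum_eq_tsum_sum_antidiagonal_of_summable_norm hφ (hexp i)
  have hsummand : ∀ i : ℕ, ∀ n : ℕ,
      (∑ kj ∈ Finset.HasAntidiagonal.antidiagonal n,
          (((kj.1 + 1).factorial : ℂ))⁻¹ • B ^ kj.1 *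
            (((kj.2.factorial : ℂ))⁻¹ • ((i : ℂ) • B) ^ kj.2))
        = (∑ kj ∈ Finset.HasAntidiagonal.antidiagonal n, (((kj.1 + 1).factorial : ℂ))⁻¹ *
            (((kj.2.factorial : ℂ))⁻¹ * (i : ℂ) ^ kj.2)) • B ^ n := by
    intro i n
    rw [Finset.sum_smul]
    refine Finset.sum_congr rfl fun kj hkj => ?_
    have hkjn : kj.1 + kj.2 = n := Finset.HasAntidiagonal.mem_antidiagonal.mp hkj
    rw [smul_pow, smul_smul, smul_mul_smul_comm, ← pow_add, hkjn]
  have hTsummable : ∀ i : ℕ, Summable fun n : ℕ =>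
      ∑ kj ∈ Finset.HasAntidiagonal.antidiagonal n,
        (((kj.1 + 1).factorial : ℂ))⁻¹ • B ^ kj.1 *
          (((kj.2.factorial : ℂ))⁻¹ • ((i : ℂ) • B) ^ kj.2) :=
    fun i => (summable_norm_sum_mul_antidiagonal_of_summable_norm hφ (hexp i)).of_norm
  calc
    (∑' k : ℕ, ((Nat.factorial (k + 1) : ℂ))⁻¹ • ((s : ℂ) • B) ^ k)
        = ∑' n : ℕ, ((s : ℂ))⁻¹ •
            (((s : ℂ) ^ (n + 1) * (((n + 1).factorial : ℂ))⁻¹) • B ^ n) := by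
      refine tsum_congr fun n => ?_
      rw [smul_pow, smul_smul, smul_smul]
      congr 1
      linear_combination -(((n + 1).factorial : ℂ))⁻¹ * (s : ℂ) ^ n * mul_inv_cancel₀ hsne
    _ = ((s : ℂ))⁻¹ • ∑' n : ℕ,
            (((s : ℂ) ^ (n + 1) * (((n + 1).factorial : ℂ))⁻¹) • B ^ n) :=
      tsum_const_smul'' _
    _ = ((s : ℂ))⁻¹ •
        ((∑' k : ℕ, ((Nat.factorial (k + 1) : ℂ))⁻¹ • B ^ k) *
          ∑ i ∈ Finset.range s, NormedSpace.exp ((i : ℂ) • B)) := by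
      congr 1
      rw [Finset.mul_sum]
      rw [Finset.sum_congr rfl fun i _ => hcauchy i, ← Summable.tsum_finsetSum fun i _ => hTsummable i]
      refine tsum_congr fun n => ?_
      rw [← phi_key s n, Finset.sum_smul]
      refine Finset.sum_congr rfl fun i _ => (hsummand i n).symm

/-- For every square complex matrix `A` and positive integer `s`, with
`Y = (1/s)A`, `φ(A) = (1/s)·φ(Y)·∑_{i=0}^{s-1} e^{iY}`. -/
theorem matrix_phi_sum_recurrence (N : ℕ) (A : Matrix (Fin N) (Fin N) ℂ) (s : ℕ) (hs : 1 ≤ s)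
    (Y : Matrix (Fin N) (Fin N) ℂ) (hY : Y = ((s : ℂ))⁻¹ • A) :
    (∑' k : ℕ, ((Nat.factorial (k + 1) : ℂ))⁻¹ • A ^ k) =
      ((s : ℂ))⁻¹ •
        ((∑' k : ℕ, ((Nat.factorial (k + 1) : ℂ))⁻¹ • Y ^ k) *
          ∑ i ∈ Finset.range s, NormedSpace.exp ((i : ℂ) • Y)) := by
  letI : SeminormedRing (Matrix (Fin N) (Fin N) ℂ) := Matrix.linftyOpSemiNormedRing
  letI : NormedRing (Matrix (Fin N) (Fin N) ℂ) := Matrix.linftyOpNormedRing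
  letI : NormedAlgebra ℂ (Matrix (Fin N) (Fin N) ℂ) := Matrix.linftyOpNormedAlgebra
  have hsne : (s : ℂ) ≠ 0 := Nat.cast_ne_zero.mpr (by omega)
  have hA : A = (s : ℂ) • Y := by
    rw [hY, smul_smul, mul_inv_cancel₀ hsne, one_smul]
  rw [hA]
  exact phi_recurrence_aux Y s hs
end

section
/- Suppose X ∈ ℂ^{N×N} satisfies ρ(e^{-X}·T̃_m(X) − I) < 1 (spectral radius condition), and let h_{m+2}(X) = log(e^{-X}·T̃_m(X)) be the principal matrix logarithm. Then T̃_m(X) = e^{X + h_{m+2}(X)} and X commutes with h_{m+2}(X). -/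
open Filter Topology NormedSpace
open scoped ENNReal NNReal

theorem aux_geom_mul {A : Type*} [NormedRing A] [CompleteSpace A] {y : A}
    (hs : Summable fun k : ℕ => y ^ k)
    (h0 : Tendsto (fun n : ℕ => y ^ n) atTop (𝓝 0)) :
    (1 - y) * ∑' k : ℕ, y ^ k = 1 := by
  have h1 : HasSum (fun k : ℕ => (1 - y) * y ^ k) ((1 - y) * ∑' k : ℕ, y ^ k) :=
    hs.hasSum.mul_left _
  have key : ∀ n : ℕ, ∑ k ∈ Finset.range n, (1 - y) * y ^ k = 1 - y ^ n := by
    intro n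
    have e : ∀ k : ℕ, (1 - y) * y ^ k = y ^ k - y ^ (k + 1) := by
      intro k; rw [sub_mul, one_mul, pow_succ']
    calc ∑ k ∈ Finset.range n, (1 - y) * y ^ k
        = ∑ k ∈ Finset.range n, (y ^ k - y ^ (k + 1)) := by simp_rw [e]
      _ = y ^ 0 - y ^ n := Finset.sum_range_sub' (fun k => y ^ k) n
      _ = 1 - y ^ n := by rw [pow_zero]
  have h2 : Tendsto (fun n : ℕ => ∑ k ∈ Finset.range n, (1 - y) * y ^ k) atTop (𝓝 1) := by
    simp_rw [key]
    simpa using tendsto_const_nhds.sub h0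
  exact tendsto_nhds_unique h1.tendsto_sum_nat h2

set_option maxHeartbeats 1000000 in
theorem exp_log_aux {A : Type*} [NormedCommRing A] [NormedAlgebra ℂ A] [CompleteSpace A]
    (E : A) (C r : ℝ) (hr0 : 0 < r) (hr1 : r < 1) (hC : 0 ≤ C)
    (hb : ∀ n : ℕ, ‖E ^ n‖ ≤ C * r ^ n) :
    NormedSpace.exp (∑' k : ℕ, ((-1 : ℂ) ^ k / ((k : ℂ) + 1)) • E ^ (k + 1)) = 1 + E := by
  -- setup
  set a : ℕ → A := fun k => ((-1 : ℂ) ^ k / ((k : ℂ) + 1)) • E ^ (k + 1) with ha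
  have hRC : ∀ (x : ℝ) (v : A), x • v = (x : ℂ) • v := by
    intro x v
    rw [← algebraMap_smul ℂ x v, Complex.coe_algebraMap]
  have hcoeff : ∀ k : ℕ, ‖((-1 : ℂ) ^ k / ((k : ℂ) + 1))‖ ≤ 1 := by
    intro k
    have h1 : ((k : ℂ) + 1) = ((k + 1 : ℕ) : ℂ) := by push_cast; ring
    rw [norm_div, norm_pow, norm_neg, norm_one, one_pow, h1, Complex.norm_natCast]
    rw [div_le_one (by positivity)]
    exact_mod_cast Nat.one_le_iff_ne_zero.mpr (Nat.succ_ne_zero k)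
  have hak : ∀ k : ℕ, ‖a k‖ ≤ C * r ^ (k + 1) := by
    intro k
    calc ‖a k‖ = ‖((-1 : ℂ) ^ k / ((k : ℂ) + 1))‖ * ‖E ^ (k + 1)‖ := norm_smul _ _
      _ ≤ 1 * (C * r ^ (k + 1)) :=
        mul_le_mul (hcoeff k) (hb (k + 1)) (norm_nonneg _) zero_le_one
      _ = C * r ^ (k + 1) := one_mul _
  set s : ℝ := (1 + r) / 2 with hs
  have hrs : r < s := by rw [hs]; linarith
  have hs0 : 0 < s := by rw [hs]; linarith
  have hs1 : s < 1 := by rw [hs]; linarith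
  set T : ℝ := s⁻¹ with hT
  have hT1 : 1 < T := one_lt_inv₀ hs0 |>.mpr hs1
  have hT0 : 0 < T := lt_trans one_pos hT1
  set q : ℝ := r / s with hq
  have hq0 : 0 ≤ q := by positivity
  have hq1 : q < 1 := (div_lt_one hs0).mpr hrs
  set I : Set ℝ := Set.Ioo (-T) T with hI
  -- the functions and their derivatives
  set g : ℕ → ℝ → A := fun k t => t ^ (k + 1) • a k with hg
  set g' : ℕ → ℝ → A := fun k t => (((k : ℝ) + 1) * t ^ k) • a k with hg'
  have hgd : ∀ (k : ℕ) (t : ℝ), HasDerivAt (g k) (g' k t) t := by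
    intro k t
    have h1 := (hasDerivAt_pow (k + 1) t).smul_const (a k)
    simpa [hg, hg'] using h1
  set u : ℕ → ℝ := fun k => (C * r) * ((((k : ℝ) + 1)) * q ^ k) with huq
  have hu : Summable u := by
    have h1 : Summable (fun k : ℕ => (k : ℝ) * q ^ k) := by
      simpa using summable_pow_mul_geometric_of_norm_lt_one 1
        (r := q) (by rwa [Real.norm_eq_abs, abs_of_nonneg hq0])
    have h2 : Summable (fun k : ℕ => q ^ k) := summable_geometric_of_lt_one hq0 hq1
    exact ((h1.add h2).mul_left (C * r)).congr (fun k => by simp only [huq]; ring)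
  have hTrq : ∀ k : ℕ, (((k : ℝ) + 1) * T ^ k) * (C * r ^ (k + 1)) = u k := by
    intro k
    simp only [huq, hq, hT, div_pow, inv_pow, pow_succ]
    field_simp
  have hbound : ∀ (k : ℕ) (t : ℝ), t ∈ I → ‖g' k t‖ ≤ u k := by
    intro k t ht
    have h1 : |t| ≤ T := le_of_lt (abs_lt.mpr ⟨ht.1, ht.2⟩)
    have h2 : ‖(((k : ℝ) + 1) * t ^ k)‖ ≤ ((k : ℝ) + 1) * T ^ k := by
      rw [Real.norm_eq_abs, abs_mul, abs_pow, abs_of_nonneg (by positivity : (0:ℝ) ≤ (k : ℝ) + 1)]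
      gcongr
    calc ‖g' k t‖ = ‖(((k : ℝ) + 1) * t ^ k)‖ * ‖a k‖ := norm_smul _ _
      _ ≤ (((k : ℝ) + 1) * T ^ k) * (C * r ^ (k + 1)) :=
        mul_le_mul h2 (hak k) (norm_nonneg _) (by positivity)
      _ = u k := hTrq k
  have h0mem : (0 : ℝ) ∈ I := ⟨by linarith, by linarith⟩
  have hg0 : Summable (fun k => g k 0) := by
    refine summable_zero.congr fun k => ?_
    simp [hg]
  set L : ℝ → A := fun t => ∑' k, g k t with hL
  have hLd : ∀ t ∈ I, HasDerivAt L (∑' k, g' k t) t := by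
    intro t ht
    exact hasDerivAt_tsum_of_isPreconnected hu isOpen_Ioo (convex_Ioo _ _).isPreconnected
      (fun k y _ => hgd k y) hbound h0mem hg0 ht
  -- identify the derivative with a geometric series
  have hterm : ∀ (t : ℝ) (k : ℕ), g' k t = (-(t • E)) ^ k * E := by
    intro t k
    have h1 : (-(t • E)) ^ k * E = ((-t) ^ k : ℝ) • E ^ (k + 1) := by
      rw [← neg_smul, smul_pow, smul_mul_assoc, ← pow_succ]
    rw [h1]
    simp only [hg', ha]
    rw [hRC, hRC, smul_smul]
    congr 1
    have hk : ((k : ℂ) + 1) ≠ 0 := by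
      have := Nat.cast_add_one_ne_zero (R := ℂ) k
      push_cast at this ⊢
      exact this
    push_cast
    field_simp
    ring
  have hpow : ∀ t : ℝ, ∀ k : ℕ, ‖(-(t • E)) ^ k‖ ≤ C * (|t| * r) ^ k := by
    intro t k
    have h1 : (-(t • E)) ^ k = ((-t) ^ k : ℝ) • E ^ k := by
      rw [← neg_smul, smul_pow]
    rw [h1, norm_smul, Real.norm_eq_abs, abs_pow, abs_neg]
    calc |t| ^ k * ‖E ^ k‖ ≤ |t| ^ k * (C * r ^ k) :=
          mul_le_mul_of_nonneg_left (hb k) (pow_nonneg (abs_nonneg t) k)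
      _ = C * (|t| * r) ^ k := by rw [mul_pow]; ring
  have hSsum : ∀ t ∈ I, Summable (fun k : ℕ => (-(t • E)) ^ k) := by
    intro t ht
    have h1 : |t| ≤ T := le_of_lt (abs_lt.mpr ⟨ht.1, ht.2⟩)
    have h2 : |t| * r ≤ q := by
      rw [hq]
      calc |t| * r ≤ T * r := by gcongr
        _ = r / s := by rw [hT]; ring
    refine Summable.of_norm_bounded ((summable_geometric_of_lt_one hq0 hq1).mul_left C) ?_
    intro k
    calc ‖(-(t • E)) ^ k‖ ≤ C * (|t| * r) ^ k := hpow t k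
      _ ≤ C * q ^ k :=
        mul_le_mul_of_nonneg_left (pow_le_pow_left₀ (by positivity) h2 k) hC
  have hD : ∀ t ∈ I, (∑' k, g' k t) = (∑' k : ℕ, (-(t • E)) ^ k) * E := by
    intro t ht
    rw [tsum_congr (hterm t)]
    exact (hSsum t ht).tsum_mul_right E
  have hkey : ∀ t ∈ I, (1 + t • E) * (∑' k : ℕ, (-(t • E)) ^ k) = 1 := by
    intro t ht
    have h1 : |t| ≤ T := le_of_lt (abs_lt.mpr ⟨ht.1, ht.2⟩)
    have h2 : |t| * r ≤ q := by
      rw [hq]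
      calc |t| * r ≤ T * r := by gcongr
        _ = r / s := by rw [hT]; ring
    have h0 : Tendsto (fun n : ℕ => (-(t • E)) ^ n) atTop (𝓝 0) := by
      refine squeeze_zero_norm (fun n => le_trans (hpow t n)
        (mul_le_mul_of_nonneg_left (pow_le_pow_left₀ (by positivity) h2 n) hC)) ?_
      simpa using ((tendsto_pow_atTop_nhds_zero_of_lt_one hq0 hq1).const_mul C)
    have h3 := aux_geom_mul (hSsum t ht) h0
    rwa [sub_neg_eq_add] at h3
  -- the auxiliary function φ
  set φ : ℝ → A := fun t => NormedSpace.exp (-(L t)) * (1 + t • E) with hφ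
  have hφ' : ∀ t ∈ I, HasDerivAt φ 0 t := by
    intro t ht
    have hneg : HasDerivAt (fun y => -(L y)) (-(∑' k, g' k t)) t := (hLd t ht).neg
    have h2 := (hasFDerivAt_exp (𝕂 := ℂ) (x := -(L t))).restrictScalars ℝ
    have h3 : HasDerivAt (fun y : ℝ => NormedSpace.exp (-(L y)))
        (NormedSpace.exp (-(L t)) * (-(∑' k, g' k t))) t := by
      have h4 := h2.comp_hasDerivAt t hneg
      exact h4.congr_deriv (by simp [smul_eq_mul])
    have hlin : HasDerivAt (fun y : ℝ => (1 : A) + y • E) E t := by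
      simpa using ((hasDerivAt_id t).smul_const E).const_add (1 : A)
    have hmul := h3.mul hlin
    have hval : NormedSpace.exp (-(L t)) * (-(∑' k, g' k t)) * (1 + t • E)
        + NormedSpace.exp (-(L t)) * E = 0 := by
      rw [hD t ht]
      have hk := hkey t ht
      linear_combination (-(NormedSpace.exp (-(L t)) * E)) * hk
    rw [hval] at hmul
    exact hmul
  have hsub : Set.Icc (0:ℝ) 1 ⊆ I := by
    intro x hx
    exact ⟨by linarith [hx.1], by linarith [hx.2]⟩
  have hconst : φ 1 = φ 0 := by
    have hcont : ContinuousOn φ (Set.Icc 0 1) := fun x hx =>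
      ((hφ' x (hsub hx)).continuousAt).continuousWithinAt
    have hderiv : ∀ x ∈ Set.Ico (0:ℝ) 1, HasDerivWithinAt φ 0 (Set.Ici x) x := fun x hx =>
      (hφ' x (hsub ⟨hx.1, hx.2.le⟩)).hasDerivWithinAt
    exact constant_of_has_deriv_right_zero hcont hderiv 1 (by norm_num)
  have hgz : ∀ k : ℕ, g k 0 = 0 := by
    intro k; simp only [hg]; simp
  have hL0 : L 0 = 0 := by
    calc L 0 = ∑' k, g k 0 := rfl
      _ = ∑' (_ : ℕ), (0 : A) := tsum_congr hgz
      _ = 0 := tsum_zero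
  have hL1 : L 1 = ∑' k, a k := by
    calc L 1 = ∑' k, g k 1 := rfl
      _ = ∑' k, a k := tsum_congr (fun k => by simp only [hg]; simp)
  have hφ0 : φ 0 = 1 := by
    calc φ 0 = NormedSpace.exp (-(L 0)) * (1 + (0:ℝ) • E) := rfl
      _ = 1 := by rw [hL0, neg_zero, NormedSpace.exp_zero, zero_smul, add_zero, one_mul]
  have h5 : NormedSpace.exp (-(∑' k, a k)) * (1 + E) = 1 := by
    have h51 : φ 1 = NormedSpace.exp (-(L 1)) * (1 + (1:ℝ) • E) := rfl
    rw [hconst, hφ0] at h51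
    rw [hL1, one_smul] at h51
    exact h51.symm
  have h6 : NormedSpace.exp (∑' k, a k) * NormedSpace.exp (-(∑' k, a k)) = 1 := by
    letI : NormedAlgebra ℚ A := .restrictScalars ℚ ℂ A
    rw [← NormedSpace.exp_add, add_neg_cancel, NormedSpace.exp_zero]
  calc NormedSpace.exp (∑' k, a k)
      = NormedSpace.exp (∑' k, a k) * (NormedSpace.exp (-(∑' k, a k)) * (1 + E)) := by
        rw [h5, mul_one]
    _ = (NormedSpace.exp (∑' k, a k) * NormedSpace.exp (-(∑' k, a k))) * (1 + E) :=
        (mul_assoc _ _ _).symm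
    _ = 1 + E := by rw [h6, one_mul]


section Main

set_option maxHeartbeats 1000000 in
/-- If `ρ(e^{-X}·T̃_m(X) − I) < 1`, and
`h = log(e^{-X}·T̃_m(X))` is the principal matrix logarithm (defined by the series
`log(I+E) = ∑_{k=1}^∞ (−1)^{k+1} E^k/k`), then `T̃_m(X) = e^{X+h}` and `X` commutes
with `h`. -/
theorem log_backward_error (N : ℕ) (X : Matrix (Fin N) (Fin N) ℂ) (m : ℕ)
    (Tt h : Matrix (Fin N) (Fin N) ℂ)
    (hTt : Tt = ∑ k ∈ Finset.range (m + 2), ((Nat.factorial k : ℂ))⁻¹ • X ^ k)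
    (hρ : spectralRadius ℂ (NormedSpace.exp (-X) * Tt - 1) < 1)
    (hh : h = ∑' k : ℕ, ((-1 : ℂ) ^ k / (k + 1)) • (NormedSpace.exp (-X) * Tt - 1) ^ (k + 1)) :
    Tt = NormedSpace.exp (X + h) ∧ Commute X h := by
  letI : SeminormedRing (Matrix (Fin N) (Fin N) ℂ) := Matrix.linftyOpSemiNormedRing
  letI : NormedRing (Matrix (Fin N) (Fin N) ℂ) := Matrix.linftyOpNormedRing
  letI : NormedAlgebra ℂ (Matrix (Fin N) (Fin N) ℂ) := Matrix.linftyOpNormedAlgebra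
  letI : NormedAlgebra ℚ (Matrix (Fin N) (Fin N) ℂ) := .restrictScalars ℚ ℂ _
  set E : Matrix (Fin N) (Fin N) ℂ := NormedSpace.exp (-X) * Tt - 1 with hE
  -- Step 1: Gelfand formula gives a geometric bound on the powers of E
  obtain ⟨r₀, hρr₀, hr₀1⟩ := ENNReal.lt_iff_exists_nnreal_btwn.mp hρ
  set r : NNReal := max r₀ 2⁻¹ with hr
  have hρr : spectralRadius ℂ E < (r : ℝ≥0∞) := by
    refine lt_of_lt_of_le hρr₀ ?_
    exact_mod_cast ENNReal.coe_le_coe.mpr (le_max_left _ _)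
  have hr1 : (r : ℝ) < 1 := by
    have h1 : r₀ < 1 := by exact_mod_cast hr₀1
    have h2 : (2⁻¹ : ℝ≥0) < 1 := by rw [← NNReal.coe_lt_coe]; norm_num
    have : r < 1 := max_lt h1 h2
    exact_mod_cast this
  have hrpos : (0 : ℝ) < (r : ℝ) := by
    have : (2⁻¹ : NNReal) ≤ r := le_max_right _ _
    have h2 : (0 : NNReal) < r := lt_of_lt_of_le (by norm_num) this
    exact_mod_cast h2
  have htend := spectrum.pow_nnnorm_pow_one_div_tendsto_nhds_spectralRadius E
  have hev : ∀ᶠ n : ℕ in atTop, (‖E ^ n‖₊ : ℝ≥0∞) ^ (1 / (n : ℝ)) < (r : ℝ≥0∞) :=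
    htend.eventually_lt_const hρr
  obtain ⟨N₀, hN₀⟩ := Filter.eventually_atTop.mp hev
  have hgeom : ∀ n : ℕ, N₀ + 1 ≤ n → ‖E ^ n‖ ≤ (r : ℝ) ^ n := by
    intro n hn
    have hn0 : (n : ℝ) ≠ 0 := by
      have : 1 ≤ n := le_trans (Nat.le_add_left 1 N₀) hn
      exact_mod_cast Nat.one_le_iff_ne_zero.mp this
    have h1 := hN₀ n (le_trans (Nat.le_succ N₀) hn)
    have h2 : ((‖E ^ n‖₊ : ℝ≥0∞) ^ (1 / (n : ℝ))) ^ (n : ℝ) < (r : ℝ≥0∞) ^ (n : ℝ) :=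
      ENNReal.rpow_lt_rpow h1 (by positivity)
    rw [← ENNReal.rpow_mul, one_div_mul_cancel hn0, ENNReal.rpow_one] at h2
    rw [ENNReal.rpow_natCast, ← ENNReal.coe_pow, ENNReal.coe_lt_coe] at h2
    have h3 : ‖E ^ n‖₊ ≤ r ^ n := h2.le
    calc ‖E ^ n‖ = ((‖E ^ n‖₊ : NNReal) : ℝ) := rfl
      _ ≤ ((r ^ n : NNReal) : ℝ) := by exact_mod_cast h3
      _ = (r : ℝ) ^ n := by push_cast; ring
  set C : ℝ := 1 + ∑ i ∈ Finset.range (N₀ + 1), ‖E ^ i‖ / (r : ℝ) ^ i with hC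
  have hsum_nonneg : 0 ≤ ∑ i ∈ Finset.range (N₀ + 1), ‖E ^ i‖ / (r : ℝ) ^ i :=
    Finset.sum_nonneg fun i _ => by positivity
  have hC1 : (1 : ℝ) ≤ C := by rw [hC]; linarith
  have hC0 : (0 : ℝ) ≤ C := le_trans zero_le_one hC1
  have hCb : ∀ n : ℕ, ‖E ^ n‖ ≤ C * (r : ℝ) ^ n := by
    intro n
    rcases lt_or_ge n (N₀ + 1) with hlt | hle
    · have hmem : n ∈ Finset.range (N₀ + 1) := Finset.mem_range.mpr hlt
      have h1 : ‖E ^ n‖ / (r : ℝ) ^ n ≤ ∑ i ∈ Finset.range (N₀ + 1), ‖E ^ i‖ / (r : ℝ) ^ i :=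
        Finset.single_le_sum (f := fun i => ‖E ^ i‖ / (r : ℝ) ^ i)
          (fun i _ => by positivity) hmem
      have h2 : ‖E ^ n‖ / (r : ℝ) ^ n ≤ C := by rw [hC]; linarith
      calc ‖E ^ n‖ = (‖E ^ n‖ / (r : ℝ) ^ n) * (r : ℝ) ^ n := by
            field_simp
        _ ≤ C * (r : ℝ) ^ n := mul_le_mul_of_nonneg_right h2 (by positivity)
    · calc ‖E ^ n‖ ≤ (r : ℝ) ^ n := hgeom n hle
        _ ≤ C * (r : ℝ) ^ n := le_mul_of_one_le_left (by positivity) hC1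
  -- Step 2: the closed commutative subalgebra generated by X
  have hXA : X ∈ Algebra.elemental ℂ X := Algebra.elemental.self_mem ℂ X
  have hTtA : Tt ∈ Algebra.elemental ℂ X := by
    rw [hTt]
    exact Subalgebra.sum_mem _ fun k _ => Subalgebra.smul_mem _ (pow_mem hXA k) _
  have hexpA : NormedSpace.exp (-X) ∈ Algebra.elemental ℂ X := by
    have hsum := NormedSpace.exp_series_hasSum_exp' (𝕂 := ℂ) (-X)
    refine (Algebra.elemental.isClosed (R := ℂ) X).mem_of_tendsto hsum.tendsto_sum_nat ?_
    exact Filter.Eventually.of_forall fun n =>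
      Subalgebra.sum_mem _ fun i _ => Subalgebra.smul_mem _ (pow_mem (neg_mem hXA) i) _
  have hEA : E ∈ Algebra.elemental ℂ X := by
    rw [hE]
    exact sub_mem (mul_mem hexpA hTtA) (one_mem _)
  letI : NormedCommRing ↥(Algebra.elemental ℂ X) :=
    { (inferInstance : NormedRing ↥(Algebra.elemental ℂ X)) with mul_comm := mul_comm }
  set EA : ↥(Algebra.elemental ℂ X) := ⟨E, hEA⟩ with hEAdef
  have hcoe_pow : ∀ n : ℕ, ((EA ^ n : ↥(Algebra.elemental ℂ X)) : Matrix (Fin N) (Fin N) ℂ)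
      = E ^ n := by
    intro n
    exact SubmonoidClass.coe_pow EA n
  have hnormEA : ∀ n : ℕ, ‖EA ^ n‖ ≤ C * (r : ℝ) ^ n := by
    intro n
    have : ‖EA ^ n‖ = ‖((EA ^ n : ↥(Algebra.elemental ℂ X)) : Matrix (Fin N) (Fin N) ℂ)‖ := rfl
    rw [this, hcoe_pow]
    exact hCb n
  have hmain := exp_log_aux EA C (r : ℝ) hrpos hr1 hC0 hnormEA
  -- Step 3: transfer back to matrices
  have hsA : Summable (fun k : ℕ => ((-1 : ℂ) ^ k / ((k : ℂ) + 1)) • EA ^ (k + 1)) := by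
    refine Summable.of_norm_bounded (g := fun k => C * ((r : ℝ) * (r : ℝ) ^ k))
      (((summable_geometric_of_lt_one hrpos.le hr1).mul_left ((r : ℝ))).mul_left C) ?_
    intro k
    have hc : ‖((-1 : ℂ) ^ k / ((k : ℂ) + 1))‖ ≤ 1 := by
      have h1 : ((k : ℂ) + 1) = ((k + 1 : ℕ) : ℂ) := by push_cast; ring
      rw [norm_div, norm_pow, norm_neg, norm_one, one_pow, h1, Complex.norm_natCast]
      rw [div_le_one (by positivity)]
      exact_mod_cast Nat.one_le_iff_ne_zero.mpr (Nat.succ_ne_zero k)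
    calc ‖((-1 : ℂ) ^ k / ((k : ℂ) + 1)) • EA ^ (k + 1)‖
        = ‖((-1 : ℂ) ^ k / ((k : ℂ) + 1))‖ * ‖EA ^ (k + 1)‖ := norm_smul _ _
      _ ≤ 1 * (C * (r : ℝ) ^ (k + 1)) :=
        mul_le_mul hc (hnormEA (k + 1)) (norm_nonneg _) zero_le_one
      _ = C * ((r : ℝ) * (r : ℝ) ^ k) := by rw [one_mul, pow_succ]; ring
  have hval_cont : Continuous ((Algebra.elemental ℂ X).val) := continuous_subtype_val
  have hmap : HasSum (fun k : ℕ => ((-1 : ℂ) ^ k / ((k : ℂ) + 1)) • E ^ (k + 1))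
      (((∑' k : ℕ, ((-1 : ℂ) ^ k / ((k : ℂ) + 1)) • EA ^ (k + 1) :
        ↥(Algebra.elemental ℂ X))) : Matrix (Fin N) (Fin N) ℂ) := by
    have h1 := hsA.hasSum.map ((Algebra.elemental ℂ X).val) hval_cont
    refine h1.congr_fun fun k => ?_
    rfl
  have hheq : h = ((∑' k : ℕ, ((-1 : ℂ) ^ k / ((k : ℂ) + 1)) • EA ^ (k + 1) :
      ↥(Algebra.elemental ℂ X)) : Matrix (Fin N) (Fin N) ℂ) := by
    rw [hh]
    exact hmap.tsum_eq
  have hexph : NormedSpace.exp h = 1 + E := by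
    letI : NormedAlgebra ℚ ↥(Algebra.elemental ℂ X) := .restrictScalars ℚ ℂ _
    have hvx := NormedSpace.map_exp ((Algebra.elemental ℂ X).val) hval_cont
      (∑' k : ℕ, ((-1 : ℂ) ^ k / ((k : ℂ) + 1)) • EA ^ (k + 1))
    replace hvx := (congrArg ((Algebra.elemental ℂ X).val) hmain).symm.trans hvx
    calc NormedSpace.exp h
        = NormedSpace.exp (((Algebra.elemental ℂ X).val)
          (∑' k : ℕ, ((-1 : ℂ) ^ k / ((k : ℂ) + 1)) • EA ^ (k + 1))) := by rw [hheq]; rfl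
      _ = ((Algebra.elemental ℂ X).val) (1 + EA) := hvx.symm
      _ = 1 + E := rfl
  have hcomm : Commute X h := by
    show X * h = h * X
    have h1 : (⟨X, hXA⟩ : ↥(Algebra.elemental ℂ X)) *
        (∑' k : ℕ, ((-1 : ℂ) ^ k / ((k : ℂ) + 1)) • EA ^ (k + 1)) =
        (∑' k : ℕ, ((-1 : ℂ) ^ k / ((k : ℂ) + 1)) • EA ^ (k + 1)) * ⟨X, hXA⟩ := mul_comm _ _
    have h2 := congrArg (Subtype.val) h1
    rw [hheq]
    exact h2
  refine ⟨?_, hcomm⟩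
  have h1E : (1 : Matrix (Fin N) (Fin N) ℂ) + E = NormedSpace.exp (-X) * Tt := by
    rw [hE]; abel
  have hXnegX : NormedSpace.exp X * NormedSpace.exp (-X) = 1 := by
    exact (NormedSpace.exp_add_of_commute ((Commute.refl X).neg_right)).symm.trans
      (by rw [add_neg_cancel, NormedSpace.exp_zero])
  calc Tt = (NormedSpace.exp X * NormedSpace.exp (-X)) * Tt := by rw [hXnegX, one_mul]
    _ = NormedSpace.exp X * (NormedSpace.exp (-X) * Tt) := mul_assoc _ _ _
    _ = NormedSpace.exp X * (NormedSpace.exp h) := by rw [hexph, h1E]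
    _ = NormedSpace.exp (X + h) := (NormedSpace.exp_add_of_commute hcomm).symm
end Main
end

section
/- For a submultiplicative matrix norm ‖·‖ and any N×N complex matrix A and positive integers p, define α_p(A) = max(‖A^p‖^{1/p}, ‖A^{p+1}‖^{1/(p+1)}). Then for any integer k ≥ p(p−1) with k ≥ 1, ‖A^k‖^{1/k} ≤ α_p(A). -/
/-- For a submultiplicative matrix norm `ν`, with
`α_p(A) = max(ν(A^p)^{1/p}, ν(A^{p+1})^{1/(p+1)})`, every integer `k ≥ p(p−1)` with
`k ≥ 1` satisfies `ν(A^k)^{1/k} ≤ α_p(A)`. -/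
theorem norm_power_alpha_bound (N : ℕ) (A : Matrix (Fin N) (Fin N) ℂ)
    (ν : Matrix (Fin N) (Fin N) ℂ → ℝ)
    (hnonneg : ∀ M, 0 ≤ ν M)
    (hmul : ∀ M₁ M₂, ν (M₁ * M₂) ≤ ν M₁ * ν M₂)
    (p : ℕ) (hp : 1 ≤ p) (k : ℕ) (hk1 : 1 ≤ k) (hk : p * (p - 1) ≤ k) :
    ν (A ^ k) ^ ((1 : ℝ) / k) ≤
      max (ν (A ^ p) ^ ((1 : ℝ) / p)) (ν (A ^ (p + 1)) ^ ((1 : ℝ) / (p + 1))) := by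
  set α := max (ν (A ^ p) ^ ((1 : ℝ) / p)) (ν (A ^ (p + 1)) ^ ((1 : ℝ) / (p + 1))) with hα
  have hα0 : 0 ≤ α := le_trans (Real.rpow_nonneg (hnonneg _) _) (le_max_left _ _)
  -- ν(A^p) ≤ α^p
  have hAp : ν (A ^ p) ≤ α ^ p := by
    have h1 : ν (A ^ p) ^ ((1 : ℝ) / p) ≤ α := le_max_left _ _
    have h2 := pow_le_pow_left₀ (Real.rpow_nonneg (hnonneg _) _) h1 p
    rwa [one_div, Real.rpow_inv_natCast_pow (hnonneg _) (by omega)] at h2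
  have hAq : ν (A ^ (p + 1)) ≤ α ^ (p + 1) := by
    have h1 : ν (A ^ (p + 1)) ^ ((1 : ℝ) / (p + 1)) ≤ α := le_max_right _ _
    have h2 := pow_le_pow_left₀ (Real.rpow_nonneg (hnonneg _) _) h1 (p + 1)
    have h3 : ((p : ℝ) + 1) = ((p + 1 : ℕ) : ℝ) := by push_cast; ring
    rw [h3, one_div, Real.rpow_inv_natCast_pow (hnonneg _) (by omega)] at h2
    exact h2
  -- submultiplicativity for powers
  have hpow : ∀ (B : Matrix (Fin N) (Fin N) ℂ) (n : ℕ), 1 ≤ n → ν (B ^ n) ≤ ν B ^ n := by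
    intro B n hn
    induction n with
    | zero => omega
    | succ m ih =>
      rcases Nat.eq_zero_or_pos m with hm | hm
      · subst hm; simp
      · calc ν (B ^ (m + 1)) = ν (B ^ m * B) := by rw [pow_succ]
          _ ≤ ν (B ^ m) * ν B := hmul _ _
          _ ≤ ν B ^ m * ν B := mul_le_mul_of_nonneg_right (ih hm) (hnonneg B)
          _ = ν B ^ (m + 1) := (pow_succ _ _).symm
  -- decomposition k = i*p + j*(p+1)
  obtain ⟨i, j, hij⟩ : ∃ i j : ℕ, k = i * p + j * (p + 1) := by
    refine ⟨k / p - k % p, k % p, ?_⟩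
    have h2 : k % p < p := Nat.mod_lt _ (by omega)
    have h3 : p - 1 ≤ k / p := by
      rw [Nat.le_div_iff_mul_le (by omega : 0 < p)]
      calc (p - 1) * p = p * (p - 1) := Nat.mul_comm _ _
        _ ≤ k := hk
    have hrq : k % p ≤ k / p := by omega
    have h1 : k / p * p + k % p = k := Nat.div_add_mod' k p
    have hb : k % p * p ≤ k / p * p := Nat.mul_le_mul_right _ hrq
    rw [Nat.sub_mul, Nat.mul_add, Nat.mul_one]
    omega
  have key : ν (A ^ k) ≤ α ^ k := by
    rcases Nat.eq_zero_or_pos i with rfl | hi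
    · have hk' : k = (p + 1) * j := by rw [hij]; ring
      have hj : 1 ≤ j := by
        rcases Nat.eq_zero_or_pos j with rfl | hj
        · simp at hk'; omega
        · exact hj
      calc ν (A ^ k) = ν ((A ^ (p + 1)) ^ j) := by rw [hk', pow_mul]
        _ ≤ ν (A ^ (p + 1)) ^ j := hpow _ _ hj
        _ ≤ (α ^ (p + 1)) ^ j := pow_le_pow_left₀ (hnonneg _) hAq j
        _ = α ^ k := by rw [← pow_mul, ← hk']
    rcases Nat.eq_zero_or_pos j with rfl | hj
    · have hk' : k = p * i := by rw [hij]; ring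
      calc ν (A ^ k) = ν ((A ^ p) ^ i) := by rw [hk', pow_mul]
        _ ≤ ν (A ^ p) ^ i := hpow _ _ hi
        _ ≤ (α ^ p) ^ i := pow_le_pow_left₀ (hnonneg _) hAp i
        _ = α ^ k := by rw [← pow_mul, ← hk']
    · have hk' : k = p * i + (p + 1) * j := by rw [hij]; ring
      calc ν (A ^ k) = ν ((A ^ p) ^ i * (A ^ (p + 1)) ^ j) := by
            rw [← pow_mul, ← pow_mul, ← pow_add, ← hk']
        _ ≤ ν ((A ^ p) ^ i) * ν ((A ^ (p + 1)) ^ j) := hmul _ _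
        _ ≤ ν (A ^ p) ^ i * ν (A ^ (p + 1)) ^ j :=
            mul_le_mul (hpow _ _ hi) (hpow _ _ hj) (hnonneg _) (pow_nonneg (hnonneg _) _)
        _ ≤ (α ^ p) ^ i * (α ^ (p + 1)) ^ j :=
            mul_le_mul (pow_le_pow_left₀ (hnonneg _) hAp i)
              (pow_le_pow_left₀ (hnonneg _) hAq j) (pow_nonneg (hnonneg _) _)
              (pow_nonneg (pow_nonneg hα0 _) _)
        _ = α ^ k := by rw [← pow_mul, ← pow_mul, ← pow_add, ← hk']
  have hk0 : (0 : ℝ) < k := by positivity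
  calc ν (A ^ k) ^ ((1 : ℝ) / k) ≤ (α ^ k) ^ ((1 : ℝ) / k) :=
        Real.rpow_le_rpow (hnonneg _) key (by positivity)
    _ = α := by
        rw [← Real.rpow_natCast α k, ← Real.rpow_mul hα0, mul_one_div,
          div_self (ne_of_gt hk0), Real.rpow_one]
end

section
/- Suppose the modified squaring approximation to φ(A) is exact at the scaled level in the sense T̃_m(X) = e^{X + h(X)} with X = 2^{-s}A, where h(X) is a matrix commuting with A. Then, for invertible A, 2^{-s}·T_m(X)·∏_{i=0}^{s-1}(T̃_m(X)^{2^i} + I) = (e^{A + ΔA} − I)·A^{-1}, where ΔA = 2^s·h(X) and T_m(X) = (T̃_m(X) − I)·X^{-1} whenever X is invertible. -/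
/-- Telescoping product identity: `(t-1)·∏_{i<s}(t^{2^i}+1) = t^{2^s}-1`. -/
lemma telescope_prod {R : Type*} [Ring R] (t : R) (s : ℕ) :
    (t - 1) * ((List.range s).map (fun i => t ^ 2 ^ i + 1)).prod = t ^ 2 ^ s - 1 := by
  induction s with
  | zero => simp
  | succ s ih =>
    rw [List.range_succ, List.map_append, List.prod_append, ← mul_assoc, ih]
    simp only [List.map_cons, List.map_nil, List.prod_cons, List.prod_nil, mul_one]
    have h1 : (t ^ 2 ^ s - 1) * (t ^ 2 ^ s + 1) = t ^ 2 ^ s * t ^ 2 ^ s - 1 := by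
      noncomm_ring
    rw [h1, ← pow_add]
    congr 2
    omega

/-- Suppose `T̃_m(X) = e^{X+h}` with `X = 2^{-s}A`, where `h` commutes with
`A`. Then, for invertible `A`,
`2^{-s}·T_m(X)·∏_{i=0}^{s-1}(T̃_m(X)^{2^i}+I) = (e^{A+ΔA} − I)·A⁻¹` with `ΔA = 2^s·h`. -/
theorem backward_error_form (N : ℕ) (A : Matrix (Fin N) (Fin N) ℂ) (hA : IsUnit A)
    (s m : ℕ) (X T Tt h : Matrix (Fin N) (Fin N) ℂ)
    (hX : X = ((2 : ℂ) ^ s)⁻¹ • A)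
    (hT : T = ∑ k ∈ Finset.range (m + 1), ((Nat.factorial (k + 1) : ℂ))⁻¹ • X ^ k)
    (hTt : Tt = X * T + 1)
    (hcomm : Commute A h)
    (hexp : Tt = NormedSpace.exp (X + h)) :
    ((2 : ℂ) ^ s)⁻¹ • (T * ((List.range s).map (fun i => Tt ^ 2 ^ i + 1)).prod) =
      (NormedSpace.exp (A + (2 : ℂ) ^ s • h) - 1) * A⁻¹ := by
  have h2 : (2 : ℂ) ^ s ≠ 0 := pow_ne_zero _ two_ne_zero
  have hXA : ((2 : ℂ) ^ s) • X = A := by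
    rw [hX, smul_smul, mul_inv_cancel₀ h2, one_smul]
  -- commutation facts
  have hXT : Commute X T := by
    rw [hT]
    exact Commute.sum_right _ _ _ fun k _ => (Commute.pow_right (Commute.refl X) k).smul_right _
  have hXTt : Commute X Tt := by
    rw [hTt]
    exact ((Commute.refl X).mul_right hXT).add_right (Commute.one_right X)
  set P := ((List.range s).map (fun i => Tt ^ 2 ^ i + 1)).prod with hP
  have hXP : Commute X P := by
    apply Commute.list_prod_right
    intro y hy
    simp only [List.mem_map] at hy
    obtain ⟨i, _, rfl⟩ := hy
    exact (hXTt.pow_right _).add_right (Commute.one_right X)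
  -- key: Tt ^ 2 ^ s = exp (A + 2^s • h)
  have hpow : Tt ^ 2 ^ s = NormedSpace.exp (A + (2 : ℂ) ^ s • h) := by
    rw [hexp, ← Matrix.exp_nsmul]
    congr 1
    have : ((2 : ℕ) ^ s : ℕ) • (X + h) = ((2 : ℂ) ^ s) • (X + h) := by
      rw [← Nat.cast_smul_eq_nsmul (R := ℂ)]
      push_cast
      ring_nf
    rw [this, smul_add, hXA]
  -- main computation
  have key : ((2 : ℂ) ^ s)⁻¹ • (T * P) * A
      = NormedSpace.exp (A + (2 : ℂ) ^ s • h) - 1 := by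
    calc ((2 : ℂ) ^ s)⁻¹ • (T * P) * A
        = T * P * (((2 : ℂ) ^ s)⁻¹ • A) := by
          rw [Matrix.mul_smul, Matrix.smul_mul]
      _ = T * P * X := by rw [← hX]
      _ = T * X * P := by rw [mul_assoc, ← hXP.eq, mul_assoc]
      _ = (Tt - 1) * P := by rw [← hXT.eq, hTt]; noncomm_ring
      _ = Tt ^ 2 ^ s - 1 := telescope_prod Tt s
      _ = NormedSpace.exp (A + (2 : ℂ) ^ s • h) - 1 := by rw [hpow]
  have hdet : IsUnit A.det := (Matrix.isUnit_iff_isUnit_det A).mp hA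
  calc ((2 : ℂ) ^ s)⁻¹ • (T * P)
      = ((2 : ℂ) ^ s)⁻¹ • (T * P) * (A * A⁻¹) := by
        rw [Matrix.mul_nonsing_inv A hdet, mul_one]
    _ = ((2 : ℂ) ^ s)⁻¹ • (T * P) * A * A⁻¹ := by rw [mul_assoc]
    _ = (NormedSpace.exp (A + (2 : ℂ) ^ s • h) - 1) * A⁻¹ := by rw [key]
end
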